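/- Uniform bound for the projection onto the solution space along the chosen complement: let T ≥ 1 and let ζ : [−T,T] → ℝⁿ be continuously differentiable. Define ζ_E : [−T,T] → ℝⁿ by ζ_E(s) := (e^{−(s+T)A₊} p₊ζ(−T), e^{(s−T)A₋} p₋ζ(T)). Then ζ_E solves ζ_E′ + A ζ_E = 0 and satisfies ‖ζ_E‖²_{W^{1,2}([−T,T])} ≤ (4 · max{1 + a₁², 1 + aₙ²} / σ) · ‖ζ‖²_{W^{1,2}([−T,T])}; in particular the projection ζ ↦ ζ_E is bounded by a constant depending only on a₁ and aₙ and not on T. -/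

import Mathlib

open Set

private lemma pub_exp_integral (c d x y : ℝ) (hc : c ≠ 0) :
    ∫ s in x..y, Real.exp (c * s + d) = (Real.exp (c * y + d) - Real.exp (c * x + d)) / c := by
  have h : ∀ s : ℝ, HasDerivAt (fun s => Real.exp (c * s + d) / c) (Real.exp (c * s + d)) s := by
    intro s
    have h1 : HasDerivAt (fun s : ℝ => c * s + d) c s := by
      simpa using ((hasDerivAt_id s).const_mul c).add_const d
    have h2 := h1.exp.div_const c
    refine h2.congr_deriv ?_
    exact mul_div_cancel_right₀ _ hc
  rw [intervalIntegral.integral_eq_sub_of_hasDerivAt (fun s _ => h s)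
      ((Real.continuous_exp.comp (by fun_prop)).intervalIntegrable x y)]
  ring

private lemma pub_normsq {n : ℕ} (x : EuclideanSpace ℝ (Fin n)) :
    ‖x‖ ^ 2 = ∑ i, (x i) ^ 2 := by
  rw [EuclideanSpace.norm_eq, Real.sq_sqrt (by positivity)]
  simp [Real.norm_eq_abs, sq_abs]

private lemma pub_trace {E : Type*} [NormedAddCommGroup E] [InnerProductSpace ℝ E]
    {b c : ℝ} {f fd : ℝ → E}
    (hf : ∀ s ∈ Icc b c, HasDerivWithinAt f (fd s) (Icc b c) s)
    (hfd : ContinuousOn fd (Icc b c)) {t s : ℝ} (ht : t ∈ Icc b c) (hs : s ∈ Icc b c) :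
    ‖f t‖ ^ 2 ≤ ‖f s‖ ^ 2 + ∫ u in b..c, (‖f u‖ ^ 2 + ‖fd u‖ ^ 2) := by
  have hbc : b ≤ c := le_trans ht.1 ht.2
  have hfc : ContinuousOn f (Icc b c) := fun u hu => (hf u hu).continuousWithinAt
  have hgdc : ContinuousOn (fun u => 2 * (inner ℝ (f u) (fd u) : ℝ)) (Icc b c) :=
    continuousOn_const.mul (hfc.inner hfd)
  have hWc : ContinuousOn (fun u => ‖f u‖ ^ 2 + ‖fd u‖ ^ 2) (Icc b c) :=
    (hfc.norm.pow 2).add (hfd.norm.pow 2)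
  have habs : ∀ u, |2 * (inner ℝ (f u) (fd u) : ℝ)| ≤ ‖f u‖ ^ 2 + ‖fd u‖ ^ 2 := by
    intro u
    have h1 := abs_real_inner_le_norm (f u) (fd u)
    have h2 := two_mul_le_add_sq ‖f u‖ ‖fd u‖
    calc |2 * (inner ℝ (f u) (fd u) : ℝ)| = 2 * |(inner ℝ (f u) (fd u) : ℝ)| := by
          rw [abs_mul]; norm_num
      _ ≤ 2 * (‖f u‖ * ‖fd u‖) := by nlinarith
      _ ≤ ‖f u‖ ^ 2 + ‖fd u‖ ^ 2 := by nlinarith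
  have hWint : ∀ x y, b ≤ x → x ≤ y → y ≤ c →
      IntervalIntegrable (fun u => ‖f u‖ ^ 2 + ‖fd u‖ ^ 2) MeasureTheory.volume x y := by
    intro x y h1 h2 h3
    exact ContinuousOn.intervalIntegrable
      (by rw [uIcc_of_le h2]; exact hWc.mono (Icc_subset_Icc h1 h3))
  have hgdint : ∀ x y, b ≤ x → x ≤ y → y ≤ c →
      IntervalIntegrable (fun u => 2 * (inner ℝ (f u) (fd u) : ℝ)) MeasureTheory.volume x y := by
    intro x y h1 h2 h3
    exact ContinuousOn.intervalIntegrable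
      (by rw [uIcc_of_le h2]; exact hgdc.mono (Icc_subset_Icc h1 h3))
  have hftc : ∀ x y, b ≤ x → x ≤ y → y ≤ c →
      (∫ u in x..y, 2 * (inner ℝ (f u) (fd u) : ℝ)) = ‖f y‖ ^ 2 - ‖f x‖ ^ 2 := by
    intro x y hbx hxy hyc
    apply intervalIntegral.integral_eq_sub_of_hasDeriv_right_of_le hxy
    · exact (hfc.mono (Icc_subset_Icc hbx hyc)).norm.pow 2
    · intro u hu
      have hub : b < u := lt_of_le_of_lt hbx hu.1
      have huc : u < c := lt_of_lt_of_le hu.2 hyc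
      have h0 : HasDerivAt f (fd u) u :=
        (hf u ⟨hub.le, huc.le⟩).hasDerivAt (Icc_mem_nhds hub huc)
      have h1 := h0.inner ℝ h0
      have hfun : (fun t : ℝ => (inner ℝ (f t) (f t) : ℝ)) = fun t => ‖f t‖ ^ 2 := by
        funext t; exact real_inner_self_eq_norm_sq (f t)
      rw [hfun] at h1
      have h2 : HasDerivAt (fun t => ‖f t‖ ^ 2) (2 * (inner ℝ (f u) (fd u) : ℝ)) u := by
        refine h1.congr_deriv ?_
        rw [real_inner_comm (fd u) (f u)]; ring
      exact h2.hasDerivWithinAt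
    · exact hgdint x y hbx hxy hyc
  have hfull : ∀ x y, b ≤ x → x ≤ y → y ≤ c →
      (∫ u in x..y, (‖f u‖ ^ 2 + ‖fd u‖ ^ 2)) ≤ ∫ u in b..c, (‖f u‖ ^ 2 + ‖fd u‖ ^ 2) := by
    intro x y h1 h2 h3
    exact intervalIntegral.integral_mono_interval h1 h2 h3
      (MeasureTheory.ae_of_all _ (fun u => by positivity)) (hWint b c le_rfl hbc le_rfl)
  rcases le_total s t with h | h
  · have e1 := hftc s t hs.1 h ht.2
    have e2 : (∫ u in s..t, 2 * (inner ℝ (f u) (fd u) : ℝ))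
        ≤ ∫ u in s..t, (‖f u‖ ^ 2 + ‖fd u‖ ^ 2) :=
      intervalIntegral.integral_mono_on h (hgdint s t hs.1 h ht.2) (hWint s t hs.1 h ht.2)
        (fun u _ => le_trans (le_abs_self _) (habs u))
    have e3 := hfull s t hs.1 h ht.2
    linarith
  · have e1 := hftc t s ht.1 h hs.2
    have e2 : (∫ u in t..s, -(2 * (inner ℝ (f u) (fd u) : ℝ)))
        ≤ ∫ u in t..s, (‖f u‖ ^ 2 + ‖fd u‖ ^ 2) :=
      intervalIntegral.integral_mono_on h ((hgdint t s ht.1 h hs.2).neg)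
        (hWint t s ht.1 h hs.2)
        (fun u _ => le_trans (neg_le_abs _) (habs u))
    rw [intervalIntegral.integral_neg] at e2
    have e3 := hfull t s ht.1 h hs.2
    linarith

/-- **Uniform bound for the projection onto the solution space along the chosen
complement.** Let `A = diag(a₁,…,aₙ)` with
`a₁ ≥ … ≥ a_{n-k} > 0 > a_{n-k+1} ≥ … ≥ aₙ` and spectral gap
`σ = min_ℓ |a_ℓ|`.  Let `T ≥ 1` and `ζ : [-T,T] → ℝⁿ` continuously
differentiable.  Define `ζ_E(s) := (e^{-(s+T)A₊} p₊ ζ(-T), e^{(s-T)A₋} p₋ ζ(T))`.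
Then `ζ_E` solves `ζ_E' + A ζ_E = 0` and
`‖ζ_E‖²_{W^{1,2}} ≤ (4 max{1+a₁², 1+aₙ²}/σ) ‖ζ‖²_{W^{1,2}}`;
in particular the projection `ζ ↦ ζ_E` is bounded by a constant depending only
on `a₁, aₙ`, independent of `T`. -/
theorem projection_uniform_bound (n k : ℕ) (hn : 1 ≤ n) (hkn : k ≤ n)
    (a : Fin n → ℝ)
    (ha_mono : ∀ i j : Fin n, i ≤ j → a j ≤ a i)
    (ha_pos : ∀ i : Fin n, (i : ℕ) < n - k → 0 < a i)
    (ha_neg : ∀ i : Fin n, n - k ≤ (i : ℕ) → a i < 0)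
    (σ : ℝ) (hσ : σ = ⨅ i : Fin n, |a i|)
    (T : ℝ) (hT : 1 ≤ T)
    (ζ ζd : ℝ → EuclideanSpace ℝ (Fin n))
    (hζ : ∀ s ∈ Icc (-T) T, HasDerivWithinAt ζ (ζd s) (Icc (-T) T) s)
    (hζd : ContinuousOn ζd (Icc (-T) T))
    (ζE ζEd : ℝ → EuclideanSpace ℝ (Fin n))
    (hζE : ∀ s, ∀ i : Fin n,
      ζE s i = if (i : ℕ) < n - k then Real.exp (-(s + T) * a i) * ζ (-T) i
               else Real.exp (-(s - T) * a i) * ζ T i)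
    (hζEd : ∀ s, ∀ i : Fin n, ζEd s i = -(a i * ζE s i)) :
    (∀ s : ℝ, HasDerivAt ζE (ζEd s) s) ∧
    (∫ s in (-T)..T, (‖ζE s‖ ^ 2 + ‖ζEd s‖ ^ 2)) ≤
      (4 * max (1 + (a ⟨0, by omega⟩) ^ 2) (1 + (a ⟨n - 1, by omega⟩) ^ 2) / σ) *
        ∫ s in (-T)..T, (‖ζ s‖ ^ 2 + ‖ζd s‖ ^ 2) := by
  haveI : Nonempty (Fin n) := ⟨⟨0, by omega⟩⟩
  -- basic facts about σ
  have hσpos : 0 < σ := by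
    obtain ⟨i0, hi0⟩ := Finite.exists_min (fun i : Fin n => |a i|)
    have h1 : 0 < |a i0| := by
      rcases lt_or_ge (i0 : ℕ) (n - k) with h | h
      · exact abs_pos.mpr (ne_of_gt (ha_pos i0 h))
      · exact abs_pos.mpr (ne_of_lt (ha_neg i0 h))
    have h2 : |a i0| ≤ σ := hσ ▸ le_ciInf hi0
    linarith
  have hσle : ∀ i, σ ≤ |a i| := fun i =>
    hσ ▸ ciInf_le (Set.Finite.bddBelow (Set.finite_range _)) i
  set M := max (1 + (a ⟨0, by omega⟩) ^ 2) (1 + (a ⟨n - 1, by omega⟩) ^ 2) with hM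
  have hMle : ∀ i : Fin n, 1 + (a i) ^ 2 ≤ M := by
    intro i
    rcases le_or_gt 0 (a i) with h | h
    · have h0 : (i : ℕ) < n - k := by
        by_contra hc
        exact absurd (ha_neg i (le_of_not_gt hc)) (by linarith)
      have ha0 : 0 < a ⟨0, by omega⟩ := ha_pos _ (by simpa using (by omega : 0 < n - k))
      have hle : a i ≤ a ⟨0, by omega⟩ := ha_mono _ i (by simp [Fin.le_def])
      have hsq : (a i) ^ 2 ≤ (a ⟨0, by omega⟩) ^ 2 := by nlinarith
      calc 1 + (a i) ^ 2 ≤ 1 + (a ⟨0, by omega⟩) ^ 2 := by linarith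
        _ ≤ M := le_max_left _ _
    · have hle : a ⟨n - 1, by omega⟩ ≤ a i := ha_mono i _ (by simp [Fin.le_def]; omega)
      have hsq : (a i) ^ 2 ≤ (a ⟨n - 1, by omega⟩) ^ 2 := by nlinarith
      calc 1 + (a i) ^ 2 ≤ 1 + (a ⟨n - 1, by omega⟩) ^ 2 := by linarith
        _ ≤ M := le_max_right _ _
  have hMnn : (0 : ℝ) ≤ M := le_trans (by positivity) (hMle ⟨0, by omega⟩)
  -- Part 1: the derivative
  have hderiv : ∀ s : ℝ, HasDerivAt ζE (ζEd s) s := by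
    intro s
    have hcomp : ∀ i : Fin n, HasDerivAt (fun u => ζE u i) (ζEd s i) s := by
      intro i
      have heq : (fun u => ζE u i) = fun u =>
          if (i : ℕ) < n - k then Real.exp (-(u + T) * a i) * ζ (-T) i
          else Real.exp (-(u - T) * a i) * ζ T i := funext fun u => hζE u i
      by_cases h : (i : ℕ) < n - k
      · have h1 : HasDerivAt (fun u : ℝ => -(u + T) * a i) (-a i) s := by
          simpa using (((hasDerivAt_id s).add_const T).neg.mul_const (a i))
        have h2 := h1.exp.mul_const (ζ (-T) i)
        rw [heq]
        simp only [if_pos h]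
        refine h2.congr_deriv ?_
        rw [hζEd s i, hζE s i, if_pos h]; ring
      · have h1 : HasDerivAt (fun u : ℝ => -(u - T) * a i) (-a i) s := by
          simpa using (((hasDerivAt_id s).sub_const T).neg.mul_const (a i))
        have h2 := h1.exp.mul_const (ζ T i)
        rw [heq]
        simp only [if_neg h]
        refine h2.congr_deriv ?_
        rw [hζEd s i, hζE s i, if_neg h]; ring
    set L := PiLp.continuousLinearEquiv 2 ℝ (fun _ : Fin n => ℝ) with hL
    have key : HasDerivAt (fun u => L (ζE u)) (L (ζEd s)) s := hasDerivAt_pi.mpr hcomp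
    have := ((L.symm : (Fin n → ℝ) →L[ℝ] EuclideanSpace ℝ (Fin n)).hasFDerivAt).comp_hasDerivAt s key
    simp only [Function.comp_def, ContinuousLinearEquiv.symm_apply_apply] at this
    exact this
  refine ⟨hderiv, ?_⟩
  -- Part 2: the estimate
  have hTT : -T ≤ T := by linarith
  have hζc : ContinuousOn ζ (Icc (-T) T) := fun u hu => (hζ u hu).continuousWithinAt
  have hWc : ContinuousOn (fun u => ‖ζ u‖ ^ 2 + ‖ζd u‖ ^ 2) (Icc (-T) T) :=
    (hζc.norm.pow 2).add (hζd.norm.pow 2)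
  have hWint : ∀ x y, -T ≤ x → x ≤ y → y ≤ T →
      IntervalIntegrable (fun u => ‖ζ u‖ ^ 2 + ‖ζd u‖ ^ 2) MeasureTheory.volume x y := by
    intro x y h1 h2 h3
    exact ContinuousOn.intervalIntegrable
      (by rw [uIcc_of_le h2]; exact hWc.mono (Icc_subset_Icc h1 h3))
  have hgint : ∀ x y, -T ≤ x → x ≤ y → y ≤ T →
      IntervalIntegrable (fun u => ‖ζ u‖ ^ 2) MeasureTheory.volume x y := by
    intro x y h1 h2 h3
    exact ContinuousOn.intervalIntegrable
      (by rw [uIcc_of_le h2]; exact (hζc.norm.pow 2).mono (Icc_subset_Icc h1 h3))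
  -- component continuity of ζE
  have hEc : ∀ i : Fin n, Continuous fun s => ζE s i := by
    intro i
    have heq : (fun s => ζE s i) = fun s =>
        if (i : ℕ) < n - k then Real.exp (-(s + T) * a i) * ζ (-T) i
        else Real.exp (-(s - T) * a i) * ζ T i := funext fun s => hζE s i
    rw [heq]
    split_ifs with h <;> fun_prop
  -- key pointwise identity
  have hkey : ∀ s : ℝ, ‖ζE s‖ ^ 2 + ‖ζEd s‖ ^ 2 = ∑ i, (1 + (a i) ^ 2) * (ζE s i) ^ 2 := by
    intro s
    rw [pub_normsq, pub_normsq, ← Finset.sum_add_distrib]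
    refine Finset.sum_congr rfl fun i _ => ?_
    rw [hζEd s i]; ring
  have hLHS : (∫ s in (-T)..T, (‖ζE s‖ ^ 2 + ‖ζEd s‖ ^ 2))
      = ∑ i, (1 + (a i) ^ 2) * ∫ s in (-T)..T, (ζE s i) ^ 2 := by
    rw [intervalIntegral.integral_congr (g := fun s => ∑ i, (1 + (a i) ^ 2) * (ζE s i) ^ 2)
        (fun s _ => hkey s)]
    rw [intervalIntegral.integral_finset_sum (f := fun i s => (1 + (a i) ^ 2) * (ζE s i) ^ 2)
        (fun i _ => ((continuous_const.mul ((hEc i).pow 2)).intervalIntegrable _ _))]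
    simp only [intervalIntegral.integral_const_mul]
  -- per-component integral bound
  have hIb : ∀ i : Fin n, (∫ s in (-T)..T, (ζE s i) ^ 2)
      ≤ (if (i : ℕ) < n - k then ζ (-T) i else ζ T i) ^ 2 / (2 * σ) := by
    intro i
    by_cases h : (i : ℕ) < n - k
    · have hαpos : 0 < a i := ha_pos i h
      have hform : ∀ s : ℝ, (ζE s i) ^ 2
          = Real.exp ((-2 * a i) * s + (-2 * a i * T)) * (ζ (-T) i) ^ 2 := by
        intro s
        rw [hζE s i, if_pos h, mul_pow]
        congr 1
        rw [sq, ← Real.exp_add]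
        congr 1; ring
      rw [intervalIntegral.integral_congr
          (g := fun s => Real.exp ((-2 * a i) * s + (-2 * a i * T)) * (ζ (-T) i) ^ 2)
          (fun s _ => hform s)]
      rw [intervalIntegral.integral_mul_const,
        pub_exp_integral _ _ _ _ (by nlinarith : (-2 * a i) ≠ 0)]
      have h1 : (-2 * a i) * (-T) + (-2 * a i * T) = 0 := by ring
      rw [h1, Real.exp_zero, if_pos h]
      have hE := Real.exp_pos ((-2 * a i) * T + (-2 * a i * T))
      have hσα : 2 * σ ≤ 2 * a i := by
        have := hσle i; rw [abs_of_pos hαpos] at this; linarith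
      have heq : (Real.exp ((-2 * a i) * T + (-2 * a i * T)) - 1) / (-2 * a i)
          = (1 - Real.exp ((-2 * a i) * T + (-2 * a i * T))) / (2 * a i) := by
        have hα0 : a i ≠ 0 := ne_of_gt hαpos
        field_simp
        ring
      rw [heq]
      calc (1 - Real.exp ((-2 * a i) * T + (-2 * a i * T))) / (2 * a i) * (ζ (-T) i) ^ 2
          ≤ 1 / (2 * σ) * (ζ (-T) i) ^ 2 :=
            mul_le_mul_of_nonneg_right
              (div_le_div₀ zero_le_one (by linarith) (by linarith) hσα) (sq_nonneg _)
        _ = (ζ (-T) i) ^ 2 / (2 * σ) := by ring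
    · have hαneg : a i < 0 := ha_neg i (le_of_not_gt h)
      have hform : ∀ s : ℝ, (ζE s i) ^ 2
          = Real.exp ((-2 * a i) * s + (2 * a i * T)) * (ζ T i) ^ 2 := by
        intro s
        rw [hζE s i, if_neg h, mul_pow]
        congr 1
        rw [sq, ← Real.exp_add]
        congr 1; ring
      rw [intervalIntegral.integral_congr
          (g := fun s => Real.exp ((-2 * a i) * s + (2 * a i * T)) * (ζ T i) ^ 2)
          (fun s _ => hform s)]
      rw [intervalIntegral.integral_mul_const,
        pub_exp_integral _ _ _ _ (by nlinarith : (-2 * a i) ≠ 0)]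
      have h1 : (-2 * a i) * T + (2 * a i * T) = 0 := by ring
      rw [h1, Real.exp_zero, if_neg h]
      have hE := Real.exp_pos ((-2 * a i) * (-T) + (2 * a i * T))
      have hσα : 2 * σ ≤ -2 * a i := by
        have := hσle i; rw [abs_of_neg hαneg] at this; linarith
      calc (1 - Real.exp ((-2 * a i) * (-T) + (2 * a i * T))) / (-2 * a i) * (ζ T i) ^ 2
          ≤ 1 / (2 * σ) * (ζ T i) ^ 2 :=
            mul_le_mul_of_nonneg_right
              (div_le_div₀ zero_le_one (by linarith) (by linarith) hσα) (sq_nonneg _)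
        _ = (ζ T i) ^ 2 / (2 * σ) := by ring
  -- sum bound
  have hsum : (∫ s in (-T)..T, (‖ζE s‖ ^ 2 + ‖ζEd s‖ ^ 2))
      ≤ M / (2 * σ) * (‖ζ (-T)‖ ^ 2 + ‖ζ T‖ ^ 2) := by
    rw [hLHS]
    calc (∑ i : Fin n, (1 + (a i) ^ 2) * ∫ s in (-T)..T, (ζE s i) ^ 2)
        ≤ ∑ i : Fin n, M * ((if (i : ℕ) < n - k then ζ (-T) i else ζ T i) ^ 2 / (2 * σ)) := by
          refine Finset.sum_le_sum fun i _ => ?_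
          have hInn : 0 ≤ ∫ s in (-T)..T, (ζE s i) ^ 2 :=
            intervalIntegral.integral_nonneg hTT (fun u _ => sq_nonneg _)
          exact mul_le_mul (hMle i) (hIb i) hInn hMnn
      _ = M / (2 * σ) * ∑ i : Fin n, (if (i : ℕ) < n - k then ζ (-T) i else ζ T i) ^ 2 := by
          rw [Finset.mul_sum]
          exact Finset.sum_congr rfl fun i _ => by ring
      _ ≤ M / (2 * σ) * (‖ζ (-T)‖ ^ 2 + ‖ζ T‖ ^ 2) := by
          refine mul_le_mul_of_nonneg_left ?_ (div_nonneg hMnn (by linarith))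
          rw [pub_normsq, pub_normsq, ← Finset.sum_add_distrib]
          refine Finset.sum_le_sum fun i _ => ?_
          by_cases h : (i : ℕ) < n - k
          · rw [if_pos h]; nlinarith [sq_nonneg (ζ T i)]
          · rw [if_neg h]; nlinarith [sq_nonneg (ζ (-T) i)]
  -- trace bounds
  have hsubp : Icc (T - 1) T ⊆ Icc (-T) T := Icc_subset_Icc (by linarith) le_rfl
  have hsubm : Icc (-T) (-T + 1) ⊆ Icc (-T) T := Icc_subset_Icc le_rfl (by linarith)
  have htrp : ∀ s ∈ Icc (T - 1) T,
      ‖ζ T‖ ^ 2 ≤ ‖ζ s‖ ^ 2 + ∫ u in (T - 1)..T, (‖ζ u‖ ^ 2 + ‖ζd u‖ ^ 2) :=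
    fun s hs => pub_trace (fun u hu => (hζ u (hsubp hu)).mono hsubp) (hζd.mono hsubp)
      ⟨by linarith, le_rfl⟩ hs
  have htrm : ∀ s ∈ Icc (-T) (-T + 1),
      ‖ζ (-T)‖ ^ 2 ≤ ‖ζ s‖ ^ 2 + ∫ u in (-T)..(-T + 1), (‖ζ u‖ ^ 2 + ‖ζd u‖ ^ 2) :=
    fun s hs => pub_trace (fun u hu => (hζ u (hsubm hu)).mono hsubm) (hζd.mono hsubm)
      ⟨le_rfl, by linarith⟩ hs
  have hbT : ‖ζ T‖ ^ 2 ≤ 2 * ∫ u in (T - 1)..T, (‖ζ u‖ ^ 2 + ‖ζd u‖ ^ 2) := by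
    have h1 : (∫ s in (T - 1)..T, ‖ζ T‖ ^ 2) = ‖ζ T‖ ^ 2 := by
      rw [intervalIntegral.integral_const, smul_eq_mul]; ring
    have h2 : (∫ s in (T - 1)..T, ‖ζ T‖ ^ 2)
        ≤ ∫ s in (T - 1)..T,
            (‖ζ s‖ ^ 2 + ∫ u in (T - 1)..T, (‖ζ u‖ ^ 2 + ‖ζd u‖ ^ 2)) :=
      intervalIntegral.integral_mono_on (by linarith) intervalIntegrable_const
        ((hgint (T - 1) T (by linarith) (by linarith) le_rfl).add intervalIntegrable_const)
        htrp
    have h3 : (∫ s in (T - 1)..T,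
          (‖ζ s‖ ^ 2 + ∫ u in (T - 1)..T, (‖ζ u‖ ^ 2 + ‖ζd u‖ ^ 2)))
        = (∫ s in (T - 1)..T, ‖ζ s‖ ^ 2)
          + ∫ u in (T - 1)..T, (‖ζ u‖ ^ 2 + ‖ζd u‖ ^ 2) := by
      rw [intervalIntegral.integral_add (hgint (T - 1) T (by linarith) (by linarith) le_rfl)
        intervalIntegrable_const, intervalIntegral.integral_const, smul_eq_mul]
      ring
    have h4 : (∫ s in (T - 1)..T, ‖ζ s‖ ^ 2)
        ≤ ∫ u in (T - 1)..T, (‖ζ u‖ ^ 2 + ‖ζd u‖ ^ 2) :=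
      intervalIntegral.integral_mono_on (by linarith)
        (hgint (T - 1) T (by linarith) (by linarith) le_rfl)
        (hWint (T - 1) T (by linarith) (by linarith) le_rfl)
        (fun s _ => le_add_of_nonneg_right (by positivity))
    linarith
  have hbmT : ‖ζ (-T)‖ ^ 2 ≤ 2 * ∫ u in (-T)..(-T + 1), (‖ζ u‖ ^ 2 + ‖ζd u‖ ^ 2) := by
    have h1 : (∫ s in (-T)..(-T + 1), ‖ζ (-T)‖ ^ 2) = ‖ζ (-T)‖ ^ 2 := by
      rw [intervalIntegral.integral_const, smul_eq_mul]; ring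
    have h2 : (∫ s in (-T)..(-T + 1), ‖ζ (-T)‖ ^ 2)
        ≤ ∫ s in (-T)..(-T + 1),
            (‖ζ s‖ ^ 2 + ∫ u in (-T)..(-T + 1), (‖ζ u‖ ^ 2 + ‖ζd u‖ ^ 2)) :=
      intervalIntegral.integral_mono_on (by linarith) intervalIntegrable_const
        ((hgint (-T) (-T + 1) le_rfl (by linarith) (by linarith)).add intervalIntegrable_const)
        htrm
    have h3 : (∫ s in (-T)..(-T + 1),
          (‖ζ s‖ ^ 2 + ∫ u in (-T)..(-T + 1), (‖ζ u‖ ^ 2 + ‖ζd u‖ ^ 2)))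
        = (∫ s in (-T)..(-T + 1), ‖ζ s‖ ^ 2)
          + ∫ u in (-T)..(-T + 1), (‖ζ u‖ ^ 2 + ‖ζd u‖ ^ 2) := by
      rw [intervalIntegral.integral_add (hgint (-T) (-T + 1) le_rfl (by linarith) (by linarith))
        intervalIntegrable_const, intervalIntegral.integral_const, smul_eq_mul]
      ring
    have h4 : (∫ s in (-T)..(-T + 1), ‖ζ s‖ ^ 2)
        ≤ ∫ u in (-T)..(-T + 1), (‖ζ u‖ ^ 2 + ‖ζd u‖ ^ 2) :=
      intervalIntegral.integral_mono_on (by linarith)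
        (hgint (-T) (-T + 1) le_rfl (by linarith) (by linarith))
        (hWint (-T) (-T + 1) le_rfl (by linarith) (by linarith))
        (fun s _ => le_add_of_nonneg_right (by positivity))
    linarith
  -- splitting the full integral
  have e1 := intervalIntegral.integral_add_adjacent_intervals
    (hWint (-T) (-T + 1) le_rfl (by linarith) (by linarith))
    (hWint (-T + 1) (T - 1) (by linarith) (by linarith) (by linarith))
  have e2 := intervalIntegral.integral_add_adjacent_intervals
    (hWint (-T) (T - 1) le_rfl (by linarith) (by linarith))
    (hWint (T - 1) T (by linarith) (by linarith) le_rfl)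
  have hmid : 0 ≤ ∫ u in (-T + 1)..(T - 1), (‖ζ u‖ ^ 2 + ‖ζd u‖ ^ 2) :=
    intervalIntegral.integral_nonneg (by linarith) (fun u _ => by positivity)
  have hWnn : 0 ≤ ∫ s in (-T)..T, (‖ζ s‖ ^ 2 + ‖ζd s‖ ^ 2) :=
    intervalIntegral.integral_nonneg hTT (fun u _ => by positivity)
  have hsplit : (∫ u in (-T)..(-T + 1), (‖ζ u‖ ^ 2 + ‖ζd u‖ ^ 2))
      + (∫ u in (T - 1)..T, (‖ζ u‖ ^ 2 + ‖ζd u‖ ^ 2))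
      ≤ ∫ s in (-T)..T, (‖ζ s‖ ^ 2 + ‖ζd s‖ ^ 2) := by linarith
  -- final assembly
  have hbd : ‖ζ (-T)‖ ^ 2 + ‖ζ T‖ ^ 2 ≤ 2 * ∫ s in (-T)..T, (‖ζ s‖ ^ 2 + ‖ζd s‖ ^ 2) := by
    linarith
  have hσ0 : σ ≠ 0 := ne_of_gt hσpos
  calc (∫ s in (-T)..T, (‖ζE s‖ ^ 2 + ‖ζEd s‖ ^ 2))
      ≤ M / (2 * σ) * (‖ζ (-T)‖ ^ 2 + ‖ζ T‖ ^ 2) := hsum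
    _ ≤ M / (2 * σ) * (2 * ∫ s in (-T)..T, (‖ζ s‖ ^ 2 + ‖ζd s‖ ^ 2)) :=
        mul_le_mul_of_nonneg_left hbd (div_nonneg hMnn (by linarith))
    _ = M / σ * ∫ s in (-T)..T, (‖ζ s‖ ^ 2 + ‖ζd s‖ ^ 2) := by
        field_simp
    _ ≤ 4 * M / σ * ∫ s in (-T)..T, (‖ζ s‖ ^ 2 + ‖ζd s‖ ^ 2) := by
        refine mul_le_mul_of_nonneg_right ?_ hWnn
        gcongr
        linarith
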